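/- arXiv:1902.03922 — 2 statements merged into one kernel-verified Lean document; each statement's English description precedes it below -/
import Mathlib

section
/- Let Z : ℝ² → ℂ be a C¹ map with Z(x+1,y) = Z(x,y) + C₁ and Z(x,y+1) = Z(x,y) + C₂, and let R = [0,1] × [0,1]. Then ∫_R dZ ∧ dconj(Z) = C₁·conj(C₂) − C₂·conj(C₁). -/
open Complex MeasureTheory Set Filter

-- fderiv is invariant under quasi-periodicity
lemma fderiv_qp {X : Type*} [NormedAddCommGroup X] [NormedSpace ℝ X]
    {Z : (ℝ × ℝ) → X} (hZ : Differentiable ℝ Z) {v₀ : ℝ × ℝ} {C : X}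
    (h : ∀ q, Z (q + v₀) = Z q + C) (p : ℝ × ℝ) :
    fderiv ℝ Z (p + v₀) = fderiv ℝ Z p := by
  have h1 : HasFDerivAt (fun q => Z (q + v₀)) (fderiv ℝ Z (p + v₀)) p := by
    have := (hZ (p + v₀)).hasFDerivAt.comp p ((hasFDerivAt_id p).add_const v₀)
    exact this
  have h2 : HasFDerivAt (fun q => Z (q + v₀)) (fderiv ℝ Z p) p := by
    simp only [h]
    exact (hZ p).hasFDerivAt.add_const C
  exact h1.unique h2

-- bounded for doubly periodic continuous function
lemma bound_of_periodic {X : Type*} [NormedAddCommGroup X]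
    {F : (ℝ × ℝ) → X} (hF : Continuous F)
    (p1 : ∀ q, F (q + ((1 : ℝ), (0 : ℝ))) = F q)
    (p2 : ∀ q, F (q + ((0 : ℝ), (1 : ℝ))) = F q) :
    ∃ M, ∀ p, ‖F p‖ ≤ M := by
  obtain ⟨M, hM⟩ := (isCompact_Icc (a := ((0:ℝ),(0:ℝ))) (b := ((1:ℝ),(1:ℝ)))).exists_bound_of_continuousOn hF.continuousOn
  refine ⟨M, fun p => ?_⟩
  have e1 : ∀ x y : ℝ, F (x, y) = F (Int.fract x, y) := by
    intro x y
    have hper : Function.Periodic (fun t => F (t, y)) 1 := by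
      intro t; have := p1 (t, y); simpa using this
    have h := hper.sub_int_mul_eq (x := x) ⌊x⌋
    rw [mul_one] at h
    rw [← Int.self_sub_floor x]
    exact h.symm
  have e2 : ∀ x y : ℝ, F (x, y) = F (x, Int.fract y) := by
    intro x y
    have hper : Function.Periodic (fun t => F (x, t)) 1 := by
      intro t; have := p2 (x, t); simpa using this
    have h := hper.sub_int_mul_eq (x := y) ⌊y⌋
    rw [mul_one] at h
    rw [← Int.self_sub_floor y]
    exact h.symm
  have : F p = F (Int.fract p.1, Int.fract p.2) := by
    rw [← e2, ← e1]
  rw [this]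
  exact hM _ ⟨⟨Int.fract_nonneg p.1, Int.fract_nonneg p.2⟩,
    ⟨(Int.fract_lt_one p.1).le, (Int.fract_lt_one p.2).le⟩⟩

lemma smooth_case (Z : ℝ × ℝ → ℂ) (hZ : ContDiff ℝ 2 Z) (C₁ C₂ : ℂ)
    (h1 : ∀ x y : ℝ, Z (x + 1, y) = Z (x, y) + C₁)
    (h2 : ∀ x y : ℝ, Z (x, y + 1) = Z (x, y) + C₂) :
    ∫ p in Set.Icc ((0 : ℝ), (0 : ℝ)) ((1 : ℝ), (1 : ℝ)),
        (fderiv ℝ Z p (1, 0) * fderiv ℝ (fun q => (starRingEnd ℂ) (Z q)) p (0, 1) -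
          fderiv ℝ Z p (0, 1) * fderiv ℝ (fun q => (starRingEnd ℂ) (Z q)) p (1, 0)) =
      C₁ * (starRingEnd ℂ) C₂ - C₂ * (starRingEnd ℂ) C₁ := by
  have h1' : ∀ q : ℝ × ℝ, Z (q + ((1:ℝ), (0:ℝ))) = Z q + C₁ := by
    intro q
    have hq : q + ((1:ℝ), (0:ℝ)) = (q.1 + 1, q.2) := by ext <;> simp
    rw [hq]
    exact h1 q.1 q.2
  have h2' : ∀ q : ℝ × ℝ, Z (q + ((0:ℝ), (1:ℝ))) = Z q + C₂ := by
    intro q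
    have hq : q + ((0:ℝ), (1:ℝ)) = (q.1, q.2 + 1) := by ext <;> simp
    rw [hq]
    exact h2 q.1 q.2
  set W : ℝ × ℝ → ℂ := fun q => (starRingEnd ℂ) (Z q) with hWdef
  have hWeq : W = (Complex.conjCLE : ℂ ≃L[ℝ] ℂ) ∘ Z := by
    funext q; simp [hWdef]
  have hW : ContDiff ℝ 2 W := by
    rw [hWeq]; exact Complex.conjCLE.contDiff.comp hZ
  have hW1 : ∀ q : ℝ × ℝ, W (q + ((1:ℝ), (0:ℝ))) = W q + (starRingEnd ℂ) C₁ := by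
    intro q; simp [hWdef, h1' q]
  have hW2 : ∀ q : ℝ × ℝ, W (q + ((0:ℝ), (1:ℝ))) = W q + (starRingEnd ℂ) C₂ := by
    intro q; simp [hWdef, h2' q]
  set A : ℝ × ℝ → ℂ := fun p => fderiv ℝ W p ((0:ℝ), (1:ℝ)) with hAdef
  set B : ℝ × ℝ → ℂ := fun p => fderiv ℝ W p ((1:ℝ), (0:ℝ)) with hBdef
  have hWf : ContDiff ℝ 1 (fderiv ℝ W) := hW.fderiv_right (le_refl _)
  have hA : ContDiff ℝ 1 A := hWf.clm_apply contDiff_const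
  have hB : ContDiff ℝ 1 B := hWf.clm_apply contDiff_const
  set f : ℝ × ℝ → ℂ := fun p => Z p * A p with hfdef
  set g : ℝ × ℝ → ℂ := fun p => -(Z p * B p) with hgdef
  have hf : ContDiff ℝ 1 f := (hZ.of_le one_le_two).mul hA
  have hg : ContDiff ℝ 1 g := ((hZ.of_le one_le_two).mul hB).neg
  -- divergence identity
  have hdiv : ∀ p : ℝ × ℝ, fderiv ℝ f p ((1:ℝ), (0:ℝ)) + fderiv ℝ g p ((0:ℝ), (1:ℝ)) =
      fderiv ℝ Z p (1, 0) * A p - fderiv ℝ Z p (0, 1) * B p := by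
    intro p
    have hZd : DifferentiableAt ℝ Z p := (hZ.differentiable two_ne_zero) p
    have hAd : DifferentiableAt ℝ A p := (hA.differentiable one_ne_zero) p
    have hBd : DifferentiableAt ℝ B p := (hB.differentiable one_ne_zero) p
    have hWfd : DifferentiableAt ℝ (fderiv ℝ W) p := (hWf.differentiable one_ne_zero) p
    have hfA : fderiv ℝ A p = (fderiv ℝ (fderiv ℝ W) p).flip ((0:ℝ), (1:ℝ)) := by
      have := fderiv_clm_apply hWfd (differentiableAt_const ((0:ℝ), (1:ℝ)))
      simpa using this
    have hfB : fderiv ℝ B p = (fderiv ℝ (fderiv ℝ W) p).flip ((1:ℝ), (0:ℝ)) := by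
      have := fderiv_clm_apply hWfd (differentiableAt_const ((1:ℝ), (0:ℝ)))
      simpa using this
    have hsym : fderiv ℝ (fderiv ℝ W) p ((1:ℝ), (0:ℝ)) ((0:ℝ), (1:ℝ)) =
        fderiv ℝ (fderiv ℝ W) p ((0:ℝ), (1:ℝ)) ((1:ℝ), (0:ℝ)) :=
      (hW.contDiffAt.isSymmSndFDerivAt (by simp)).eq _ _
    have e1 : fderiv ℝ f p = Z p • fderiv ℝ A p + A p • fderiv ℝ Z p := fderiv_fun_mul hZd hAd
    have e2 : fderiv ℝ g p = -(Z p • fderiv ℝ B p + B p • fderiv ℝ Z p) := by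
      rw [hgdef]
      simp only [fderiv_fun_neg]
      rw [fderiv_fun_mul hZd hBd]
    rw [e1, e2, hfA, hfB]
    simp only [ContinuousLinearMap.add_apply, ContinuousLinearMap.smul_apply,
      ContinuousLinearMap.neg_apply, ContinuousLinearMap.flip_apply]
    rw [hsym]
    simp only [smul_eq_mul]
    ring
  -- periodicity of fderiv W
  have hWdiff : Differentiable ℝ W := hW.differentiable two_ne_zero
  have hpW1 : ∀ p, fderiv ℝ W (p + ((1:ℝ),(0:ℝ))) = fderiv ℝ W p := fderiv_qp hWdiff hW1
  have hpW2 : ∀ p, fderiv ℝ W (p + ((0:ℝ),(1:ℝ))) = fderiv ℝ W p := fderiv_qp hWdiff hW2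
  have hle : ((0:ℝ),(0:ℝ)) ≤ ((1:ℝ),(1:ℝ)) := by constructor <;> norm_num
  have hcontf' : Continuous (fun x => fderiv ℝ f x ((1:ℝ),(0:ℝ))) :=
    (ContinuousLinearMap.apply ℝ ℂ ((1:ℝ),(0:ℝ))).continuous.comp (hf.continuous_fderiv one_ne_zero)
  have hcontg' : Continuous (fun x => fderiv ℝ g x ((0:ℝ),(1:ℝ))) :=
    (ContinuousLinearMap.apply ℝ ℂ ((0:ℝ),(1:ℝ))).continuous.comp (hg.continuous_fderiv one_ne_zero)
  have Hi : MeasureTheory.IntegrableOn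
      (fun x => fderiv ℝ f x ((1:ℝ),(0:ℝ)) + fderiv ℝ g x ((0:ℝ),(1:ℝ)))
      (Set.Icc ((0:ℝ),(0:ℝ)) ((1:ℝ),(1:ℝ))) :=
    (hcontf'.add hcontg').continuousOn.integrableOn_compact isCompact_Icc
  have key := MeasureTheory.integral_divergence_prod_Icc_of_hasFDerivAt_off_countable_of_le
      f g (fun p => fderiv ℝ f p) (fun p => fderiv ℝ g p) ((0:ℝ),(0:ℝ)) ((1:ℝ),(1:ℝ)) hle
      ∅ Set.countable_empty hf.continuous.continuousOn hg.continuous.continuousOn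
      (fun x _ => ((hf.differentiable one_ne_zero) x).hasFDerivAt)
      (fun x _ => ((hg.differentiable one_ne_zero) x).hasFDerivAt) Hi
  -- boundary term computations
  have hWc : Continuous (fderiv ℝ W) := hW.continuous_fderiv two_ne_zero
  have hcontA : Continuous A := hA.continuous
  have hcontB : Continuous B := hB.continuous
  -- FTC along vertical segment
  have hcurveV : ∀ y : ℝ, HasDerivAt (fun t => W ((0:ℝ), t)) (A ((0:ℝ), y)) y := by
    intro y
    have hd1 : HasFDerivAt W (fderiv ℝ W ((0:ℝ), y)) ((0:ℝ), y) := (hWdiff _).hasFDerivAt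
    have hd2 : HasDerivAt (fun t : ℝ => ((0:ℝ), t)) ((0:ℝ),(1:ℝ)) y := by
      have := (hasDerivAt_const y (0:ℝ)).prodMk (hasDerivAt_id y)
      simpa using this
    exact hd1.comp_hasDerivAt y hd2
  have hcontAV : Continuous (fun y : ℝ => A ((0:ℝ), y)) :=
    hcontA.comp (continuous_const.prodMk continuous_id)
  have hintA : (∫ y in (0:ℝ)..1, A ((0:ℝ), y)) = W ((0:ℝ),(1:ℝ)) - W ((0:ℝ),(0:ℝ)) :=
    intervalIntegral.integral_eq_sub_of_hasDerivAt (f := fun t => W ((0:ℝ), t))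
      (f' := fun y => A ((0:ℝ), y)) (fun y _ => hcurveV y) (hcontAV.intervalIntegrable 0 1)
  have hcurveH : ∀ x : ℝ, HasDerivAt (fun t => W (t, (0:ℝ))) (B (x, (0:ℝ))) x := by
    intro x
    have hd1 : HasFDerivAt W (fderiv ℝ W (x, (0:ℝ))) (x, (0:ℝ)) := (hWdiff _).hasFDerivAt
    have hd2 : HasDerivAt (fun t : ℝ => (t, (0:ℝ))) ((1:ℝ),(0:ℝ)) x := by
      have := (hasDerivAt_id x).prodMk (hasDerivAt_const x (0:ℝ))
      simpa using this
    exact hd1.comp_hasDerivAt x hd2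
  have hcontBH : Continuous (fun x : ℝ => B (x, (0:ℝ))) :=
    hcontB.comp (continuous_id.prodMk continuous_const)
  have hintB : (∫ x in (0:ℝ)..1, B (x, (0:ℝ))) = W ((1:ℝ),(0:ℝ)) - W ((0:ℝ),(0:ℝ)) :=
    intervalIntegral.integral_eq_sub_of_hasDerivAt (f := fun t => W (t, (0:ℝ)))
      (f' := fun x => B (x, (0:ℝ))) (fun x _ => hcurveH x) (hcontBH.intervalIntegrable 0 1)
  have hWC2 : W ((0:ℝ),(1:ℝ)) - W ((0:ℝ),(0:ℝ)) = (starRingEnd ℂ) C₂ := by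
    have := h2 0 0
    rw [zero_add] at this
    simp [hWdef, this]
  have hWC1 : W ((1:ℝ),(0:ℝ)) - W ((0:ℝ),(0:ℝ)) = (starRingEnd ℂ) C₁ := by
    have := h1 0 0
    rw [zero_add] at this
    simp [hWdef, this]
  -- difference of boundary values
  have hfy : ∀ y : ℝ, f ((1:ℝ), y) - f ((0:ℝ), y) = C₁ * A ((0:ℝ), y) := by
    intro y
    have e1 : ((0:ℝ), y) + ((1:ℝ),(0:ℝ)) = ((1:ℝ), y) := by ext <;> simp
    have eZ : Z ((1:ℝ), y) = Z ((0:ℝ), y) + C₁ := by rw [← e1]; exact h1' _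
    have eA : A ((1:ℝ), y) = A ((0:ℝ), y) := by
      show fderiv ℝ W ((1:ℝ), y) ((0:ℝ),(1:ℝ)) = fderiv ℝ W ((0:ℝ), y) ((0:ℝ),(1:ℝ))
      rw [← e1, hpW1]
    show Z ((1:ℝ), y) * A ((1:ℝ), y) - Z ((0:ℝ), y) * A ((0:ℝ), y) = C₁ * A ((0:ℝ), y)
    rw [eZ, eA]; ring
  have hgx : ∀ x : ℝ, g (x, (1:ℝ)) - g (x, (0:ℝ)) = -(C₂ * B (x, (0:ℝ))) := by
    intro x
    have e1 : (x, (0:ℝ)) + ((0:ℝ),(1:ℝ)) = (x, (1:ℝ)) := by ext <;> simp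
    have eZ : Z (x, (1:ℝ)) = Z (x, (0:ℝ)) + C₂ := by rw [← e1]; exact h2' _
    have eB : B (x, (1:ℝ)) = B (x, (0:ℝ)) := by
      show fderiv ℝ W (x, (1:ℝ)) ((1:ℝ),(0:ℝ)) = fderiv ℝ W (x, (0:ℝ)) ((1:ℝ),(0:ℝ))
      rw [← e1, hpW2]
    show -(Z (x, (1:ℝ)) * B (x, (1:ℝ))) - -(Z (x, (0:ℝ)) * B (x, (0:ℝ))) = -(C₂ * B (x, (0:ℝ)))
    rw [eZ, eB]; ring
  have hZc : Continuous Z := hZ.continuous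
  have hT34 : (∫ y in (0:ℝ)..1, f ((1:ℝ), y)) - (∫ y in (0:ℝ)..1, f ((0:ℝ), y))
      = C₁ * (starRingEnd ℂ) C₂ := by
    have hi1 : IntervalIntegrable (fun y : ℝ => f ((1:ℝ), y)) MeasureTheory.volume 0 1 :=
      Continuous.intervalIntegrable (hf.continuous.comp (continuous_const.prodMk continuous_id)) 0 1
    have hi2 : IntervalIntegrable (fun y : ℝ => f ((0:ℝ), y)) MeasureTheory.volume 0 1 :=
      Continuous.intervalIntegrable (hf.continuous.comp (continuous_const.prodMk continuous_id)) 0 1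
    rw [← intervalIntegral.integral_sub hi1 hi2]
    rw [intervalIntegral.integral_congr (g := fun y => C₁ * A ((0:ℝ), y)) (fun y _ => hfy y)]
    rw [intervalIntegral.integral_const_mul, hintA, hWC2]
  have hT12 : (∫ x in (0:ℝ)..1, g (x, (1:ℝ))) - (∫ x in (0:ℝ)..1, g (x, (0:ℝ)))
      = -(C₂ * (starRingEnd ℂ) C₁) := by
    have hi1 : IntervalIntegrable (fun x : ℝ => g (x, (1:ℝ))) MeasureTheory.volume 0 1 :=
      Continuous.intervalIntegrable (hg.continuous.comp (continuous_id.prodMk continuous_const)) 0 1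
    have hi2 : IntervalIntegrable (fun x : ℝ => g (x, (0:ℝ))) MeasureTheory.volume 0 1 :=
      Continuous.intervalIntegrable (hg.continuous.comp (continuous_id.prodMk continuous_const)) 0 1
    rw [← intervalIntegral.integral_sub hi1 hi2]
    rw [intervalIntegral.integral_congr (g := fun x => -(C₂ * B (x, (0:ℝ)))) (fun x _ => hgx x)]
    rw [intervalIntegral.integral_neg, intervalIntegral.integral_const_mul, hintB, hWC1]
  -- put everything together
  calc ∫ p in Set.Icc ((0 : ℝ), (0 : ℝ)) ((1 : ℝ), (1 : ℝ)),
        (fderiv ℝ Z p (1, 0) * fderiv ℝ W p (0, 1) -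
          fderiv ℝ Z p (0, 1) * fderiv ℝ W p (1, 0))
      = ∫ p in Set.Icc ((0 : ℝ), (0 : ℝ)) ((1 : ℝ), (1 : ℝ)),
        (fderiv ℝ f p ((1:ℝ),(0:ℝ)) + fderiv ℝ g p ((0:ℝ),(1:ℝ))) := by
        apply MeasureTheory.integral_congr_ae
        filter_upwards with p
        exact (hdiv p).symm
    _ = (((∫ x in (0:ℝ)..(1:ℝ), g (x, (1:ℝ))) - ∫ x in (0:ℝ)..(1:ℝ), g (x, (0:ℝ))) +
          ∫ y in (0:ℝ)..(1:ℝ), f ((1:ℝ), y)) - ∫ y in (0:ℝ)..(1:ℝ), f ((0:ℝ), y) := key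
    _ = C₁ * (starRingEnd ℂ) C₂ - C₂ * (starRingEnd ℂ) C₁ := by
        linear_combination hT12 + hT34

open scoped Convolution

set_option maxHeartbeats 1000000
set_option synthInstance.maxHeartbeats 200000

lemma conj_fderiv (U : ℝ × ℝ → ℂ) (p : ℝ × ℝ) (v : ℝ × ℝ) :
    fderiv ℝ (fun q => (starRingEnd ℂ) (U q)) p v = (starRingEnd ℂ) (fderiv ℝ U p v) := by
  have he : (fun q => (starRingEnd ℂ) (U q)) = (⇑(Complex.conjCLE : ℂ ≃L[ℝ] ℂ) ∘ U) := by
    funext q; simp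
  rw [he, ContinuousLinearEquiv.comp_fderiv]
  simp

theorem stmt_14 (Z : ℝ × ℝ → ℂ) (hZ : ContDiff ℝ 1 Z) (C₁ C₂ : ℂ)
    (h1 : ∀ x y : ℝ, Z (x + 1, y) = Z (x, y) + C₁)
    (h2 : ∀ x y : ℝ, Z (x, y + 1) = Z (x, y) + C₂) :
    ∫ p in Set.Icc ((0 : ℝ), (0 : ℝ)) ((1 : ℝ), (1 : ℝ)),
        (fderiv ℝ Z p (1, 0) * fderiv ℝ (fun q => (starRingEnd ℂ) (Z q)) p (0, 1) -
          fderiv ℝ Z p (0, 1) * fderiv ℝ (fun q => (starRingEnd ℂ) (Z q)) p (1, 0)) =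
      C₁ * (starRingEnd ℂ) C₂ - C₂ * (starRingEnd ℂ) C₁ := by
  have hZ1 : Differentiable ℝ Z := hZ.differentiable one_ne_zero
  have h1' : ∀ q : ℝ × ℝ, Z (q + ((1:ℝ), (0:ℝ))) = Z q + C₁ := by
    intro q
    have hq : q + ((1:ℝ), (0:ℝ)) = (q.1 + 1, q.2) := by ext <;> simp
    rw [hq]; exact h1 q.1 q.2
  have h2' : ∀ q : ℝ × ℝ, Z (q + ((0:ℝ), (1:ℝ))) = Z q + C₂ := by
    intro q
    have hq : q + ((0:ℝ), (1:ℝ)) = (q.1, q.2 + 1) := by ext <;> simp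
    rw [hq]; exact h2 q.1 q.2
  have hp1 : ∀ p, fderiv ℝ Z (p + ((1:ℝ),(0:ℝ))) = fderiv ℝ Z p := fderiv_qp hZ1 h1'
  have hp2 : ∀ p, fderiv ℝ Z (p + ((0:ℝ),(1:ℝ))) = fderiv ℝ Z p := fderiv_qp hZ1 h2'
  obtain ⟨M, hM⟩ := bound_of_periodic (hZ.continuous_fderiv one_ne_zero) hp1 hp2
  set M0 : ℝ := max M 0 with hM0def
  have hM0 : ∀ p, ‖fderiv ℝ Z p‖ ≤ M0 := fun p => le_max_of_le_left (hM p)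
  have hM0nn : 0 ≤ M0 := le_max_right _ _
  -- the bump functions
  set φ : ℕ → ContDiffBump ((0 : ℝ) , (0 : ℝ)) := fun n =>
    ⟨((n:ℝ)+1)⁻¹, 2*((n:ℝ)+1)⁻¹, by positivity, by
      have : (0:ℝ) < ((n:ℝ)+1)⁻¹ := by positivity
      linarith⟩ with hφdef
  set ψ : ℕ → (ℝ × ℝ) → ℝ := fun n => (φ n).normed MeasureTheory.volume with hψdef
  have hψc : ∀ n, Continuous (ψ n) := fun n => (φ n).continuous_normed
  have hψcs : ∀ n, HasCompactSupport (ψ n) := fun n => (φ n).hasCompactSupport_normed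
  have hψint : ∀ n, MeasureTheory.Integrable (ψ n) := fun n => (φ n).integrable_normed
  have hψnn : ∀ n t, 0 ≤ ψ n t := fun n t => (φ n).nonneg_normed t
  have hψ1 : ∀ n, ∫ t, ψ n t = 1 := fun n => (φ n).integral_normed
  set Zn : ℕ → (ℝ × ℝ) → ℂ := fun n p => ∫ t, ψ n t • Z (p - t) with hZndef
  have hZloc : MeasureTheory.LocallyIntegrable Z := hZ.continuous.locallyIntegrable
  have hZnconv : ∀ n, Zn n = (ψ n ⋆[ContinuousLinearMap.lsmul ℝ ℝ, MeasureTheory.volume] Z) := by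
    intro n; funext p
    rw [convolution_def]
    simp [hZndef]
  have hZnsmooth : ∀ n, ContDiff ℝ 2 (Zn n) := by
    intro n
    rw [hZnconv n]
    exact (hψcs n).contDiff_convolution_left _ ((φ n).contDiff_normed) hZloc
  -- integrability facts
  have hFint : ∀ n (p : ℝ × ℝ), MeasureTheory.Integrable (fun t => ψ n t • Z (p - t)) := by
    intro n p
    apply Continuous.integrable_of_hasCompactSupport
    · exact (hψc n).smul (hZ.continuous.comp (continuous_const.sub continuous_id))
    · exact (hψcs n).smul_right
  have hF'int : ∀ n (p : ℝ × ℝ), MeasureTheory.Integrable (fun t => ψ n t • fderiv ℝ Z (p - t)) := by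
    intro n p
    apply Continuous.integrable_of_hasCompactSupport
    · exact (hψc n).smul ((hZ.continuous_fderiv one_ne_zero).comp (continuous_const.sub continuous_id))
    · exact (hψcs n).smul_right (f' := fun t => fderiv ℝ Z (p - t))
  -- derivative of Zn
  have hD : ∀ n (p : ℝ × ℝ), HasFDerivAt (Zn n) (∫ t, ψ n t • fderiv ℝ Z (p - t)) p := by
    intro n p
    apply hasFDerivAt_integral_of_dominated_of_fderiv_le
      (F' := fun (x : ℝ × ℝ) t => ψ n t • fderiv ℝ Z (x - t)) (bound := fun t => ψ n t * M0)
      (s := Metric.ball p 1) (Metric.ball_mem_nhds p one_pos)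
    · filter_upwards with x
      exact ((hψc n).smul (hZ.continuous.comp (continuous_const.sub continuous_id))).aestronglyMeasurable
    · exact hFint n p
    · exact ((hψc n).smul ((hZ.continuous_fderiv one_ne_zero).comp
        (continuous_const.sub continuous_id))).aestronglyMeasurable
    · filter_upwards with t x _
      show ‖ψ n t • fderiv ℝ Z (x - t)‖ ≤ ψ n t * M0
      calc ‖ψ n t • fderiv ℝ Z (x - t)‖ = ‖ψ n t‖ * ‖fderiv ℝ Z (x - t)‖ := by
            exact norm_smul (ψ n t) (fderiv ℝ Z (x - t))
        _ ≤ ‖ψ n t‖ * M0 := mul_le_mul_of_nonneg_left (hM0 _) (norm_nonneg _)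
        _ = ψ n t * M0 := by rw [Real.norm_of_nonneg (hψnn n t)]
    · exact (hψint n).mul_const M0
    · filter_upwards with t x _
      show HasFDerivAt (fun x : ℝ × ℝ => ψ n t • Z (x - t)) (ψ n t • fderiv ℝ Z (x - t)) x
      have hd : HasFDerivAt (fun x : ℝ × ℝ => Z (x - t)) (fderiv ℝ Z (x - t)) x := by
        have := (hZ1 (x - t)).hasFDerivAt.comp x ((hasFDerivAt_id x).sub_const t)
        exact this
      exact hd.const_smul (ψ n t)
  have hDf : ∀ n (p : ℝ × ℝ), fderiv ℝ (Zn n) p = ∫ t, ψ n t • fderiv ℝ Z (p - t) :=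
    fun n p => (hD n p).fderiv
  -- applied derivative is a convolution
  have happ : ∀ n (p : ℝ × ℝ) (v : ℝ × ℝ), fderiv ℝ (Zn n) p v
      = ((ψ n) ⋆[ContinuousLinearMap.lsmul ℝ ℝ, MeasureTheory.volume]
          (fun q => fderiv ℝ Z q v)) p := by
    intro n p v
    rw [hDf n p, ContinuousLinearMap.integral_apply (hF'int n p), convolution_def]
    simp
  -- quasi-periodicity of Zn
  have hZnqp : ∀ n (p : ℝ × ℝ) (v : ℝ × ℝ) (C : ℂ), (∀ q : ℝ × ℝ, Z (q + v) = Z q + C) →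
      Zn n (p + v) = Zn n p + C := by
    intro n p v C hC
    show (∫ t, ψ n t • Z ((p + v) - t)) = (∫ t, ψ n t • Z (p - t)) + C
    have e : ∀ t : ℝ × ℝ, (p + v) - t = (p - t) + v := by intro t; abel
    calc (∫ t, ψ n t • Z ((p + v) - t)) = ∫ t, (ψ n t • Z (p - t) + ψ n t • C) := by
          congr 1; funext t; rw [e t, hC, smul_add]
      _ = (∫ t, ψ n t • Z (p - t)) + ∫ t, ψ n t • C :=
          MeasureTheory.integral_add (hFint n p) ((hψint n).smul_const C)
      _ = (∫ t, ψ n t • Z (p - t)) + C := by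
          rw [integral_smul_const, hψ1 n, one_smul]
  have hZn1 : ∀ n (x y : ℝ), Zn n (x + 1, y) = Zn n (x, y) + C₁ := by
    intro n x y
    have hq : ((x:ℝ), y) + ((1:ℝ), (0:ℝ)) = (x + 1, y) := by ext <;> simp
    rw [← hq]
    exact hZnqp n (x, y) _ C₁ h1'
  have hZn2 : ∀ n (x y : ℝ), Zn n (x, y + 1) = Zn n (x, y) + C₂ := by
    intro n x y
    have hq : ((x:ℝ), y) + ((0:ℝ), (1:ℝ)) = (x, y + 1) := by ext <;> simp
    rw [← hq]
    exact hZnqp n (x, y) _ C₂ h2'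
  have hsm := fun n => smooth_case (Zn n) (hZnsmooth n) C₁ C₂ (hZn1 n) (hZn2 n)
  -- pointwise convergence of the derivatives
  have hrOut : Filter.Tendsto (fun n => (φ n).rOut) Filter.atTop (nhds 0) := by
    have h0 : Filter.Tendsto (fun n : ℕ => ((n:ℝ)+1)⁻¹) Filter.atTop (nhds 0) := by
      simpa [one_div] using tendsto_one_div_add_atTop_nhds_zero_nat (𝕜 := ℝ)
    have := h0.const_mul (2:ℝ)
    simpa [hφdef] using this
  have hconv : ∀ (v : ℝ × ℝ) (p : ℝ × ℝ), Filter.Tendsto (fun n => fderiv ℝ (Zn n) p v)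
      Filter.atTop (nhds (fderiv ℝ Z p v)) := by
    intro v p
    have hg : Continuous (fun q => fderiv ℝ Z q v) :=
      (ContinuousLinearMap.apply ℝ ℂ v).continuous.comp (hZ.continuous_fderiv one_ne_zero)
    have ht := ContDiffBump.convolution_tendsto_right_of_continuous
      (φ := φ) (μ := MeasureTheory.volume) hrOut hg p
    exact ht.congr (fun n => (happ n p v).symm)
  -- uniform bound on the derivatives
  have hbound : ∀ n (p : ℝ × ℝ), ‖fderiv ℝ (Zn n) p‖ ≤ M0 := by
    intro n p
    rw [hDf n p]
    calc ‖∫ t, ψ n t • fderiv ℝ Z (p - t)‖ ≤ ∫ t, ‖ψ n t • fderiv ℝ Z (p - t)‖ :=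
          MeasureTheory.norm_integral_le_integral_norm _
      _ ≤ ∫ t, ψ n t * M0 := by
          apply MeasureTheory.integral_mono (hF'int n p).norm ((hψint n).mul_const M0)
          intro t
          calc ‖ψ n t • fderiv ℝ Z (p - t)‖ = ‖ψ n t‖ * ‖fderiv ℝ Z (p - t)‖ := by
                exact norm_smul (ψ n t) (fderiv ℝ Z (p - t))
            _ ≤ ‖ψ n t‖ * M0 := mul_le_mul_of_nonneg_left (hM0 _) (norm_nonneg _)
            _ = ψ n t * M0 := by rw [Real.norm_of_nonneg (hψnn n t)]
      _ = M0 := by rw [MeasureTheory.integral_mul_const, hψ1 n, one_mul]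
  have hv1 : ‖((1:ℝ), (0:ℝ))‖ = 1 := by simp [Prod.norm_def]
  have hv2 : ‖((0:ℝ), (1:ℝ))‖ = 1 := by simp [Prod.norm_def]
  have hbapp : ∀ n (p : ℝ × ℝ) (v : ℝ × ℝ), ‖v‖ = 1 → ‖fderiv ℝ (Zn n) p v‖ ≤ M0 := by
    intro n p v hv
    calc ‖fderiv ℝ (Zn n) p v‖ ≤ ‖fderiv ℝ (Zn n) p‖ * ‖v‖ :=
          ContinuousLinearMap.le_opNorm _ _
      _ ≤ M0 := by rw [hv, mul_one]; exact hbound n p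
  -- rewrite conjugates
  simp only [conj_fderiv] at hsm ⊢
  -- dominated convergence
  have hGc : Continuous (fun z : ℂ × ℂ => z.1 * (starRingEnd ℂ) z.2 - z.2 * (starRingEnd ℂ) z.1) := by
    exact (continuous_fst.mul (continuous_star.comp continuous_snd)).sub
      (continuous_snd.mul (continuous_star.comp continuous_fst))
  have hdom : Filter.Tendsto (fun n => ∫ p in Set.Icc ((0:ℝ),(0:ℝ)) ((1:ℝ),(1:ℝ)),
      (fderiv ℝ (Zn n) p (1, 0) * (starRingEnd ℂ) (fderiv ℝ (Zn n) p (0, 1)) -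
        fderiv ℝ (Zn n) p (0, 1) * (starRingEnd ℂ) (fderiv ℝ (Zn n) p (1, 0))))
      Filter.atTop (nhds (∫ p in Set.Icc ((0:ℝ),(0:ℝ)) ((1:ℝ),(1:ℝ)),
      (fderiv ℝ Z p (1, 0) * (starRingEnd ℂ) (fderiv ℝ Z p (0, 1)) -
        fderiv ℝ Z p (0, 1) * (starRingEnd ℂ) (fderiv ℝ Z p (1, 0))))) := by
    apply MeasureTheory.tendsto_integral_of_dominated_convergence (fun _ => M0 * M0 + M0 * M0)
    · intro n
      have hfc : Continuous (fderiv ℝ (Zn n)) := (hZnsmooth n).continuous_fderiv two_ne_zero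
      have c1 : Continuous (fun p => fderiv ℝ (Zn n) p ((1:ℝ),(0:ℝ))) :=
        (ContinuousLinearMap.apply ℝ ℂ ((1:ℝ),(0:ℝ))).continuous.comp hfc
      have c2 : Continuous (fun p => fderiv ℝ (Zn n) p ((0:ℝ),(1:ℝ))) :=
        (ContinuousLinearMap.apply ℝ ℂ ((0:ℝ),(1:ℝ))).continuous.comp hfc
      exact (hGc.comp (c1.prodMk c2)).aestronglyMeasurable
    · rw [MeasureTheory.integrable_const_iff]
      right
      exact ⟨by rw [MeasureTheory.Measure.restrict_apply_univ]; exact isCompact_Icc.measure_lt_top⟩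
    · intro n
      filter_upwards with p
      calc ‖fderiv ℝ (Zn n) p (1, 0) * (starRingEnd ℂ) (fderiv ℝ (Zn n) p (0, 1)) -
            fderiv ℝ (Zn n) p (0, 1) * (starRingEnd ℂ) (fderiv ℝ (Zn n) p (1, 0))‖
          ≤ ‖fderiv ℝ (Zn n) p (1, 0) * (starRingEnd ℂ) (fderiv ℝ (Zn n) p (0, 1))‖ +
            ‖fderiv ℝ (Zn n) p (0, 1) * (starRingEnd ℂ) (fderiv ℝ (Zn n) p (1, 0))‖ :=
            norm_sub_le _ _
        _ ≤ M0 * M0 + M0 * M0 := by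
            rw [norm_mul, norm_mul]
            gcongr
            · exact hbapp n p _ hv1
            · simpa using hbapp n p _ hv2
            · exact hbapp n p _ hv2
            · simpa using hbapp n p _ hv1
    · filter_upwards with p
      have := (hGc.tendsto (fderiv ℝ Z p (1, 0), fderiv ℝ Z p (0, 1))).comp
        ((hconv ((1:ℝ),(0:ℝ)) p).prodMk_nhds (hconv ((0:ℝ),(1:ℝ)) p))
      exact this
  have hconst : Filter.Tendsto (fun n => ∫ p in Set.Icc ((0:ℝ),(0:ℝ)) ((1:ℝ),(1:ℝ)),
      (fderiv ℝ (Zn n) p (1, 0) * (starRingEnd ℂ) (fderiv ℝ (Zn n) p (0, 1)) -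
        fderiv ℝ (Zn n) p (0, 1) * (starRingEnd ℂ) (fderiv ℝ (Zn n) p (1, 0))))
      Filter.atTop (nhds (C₁ * (starRingEnd ℂ) C₂ - C₂ * (starRingEnd ℂ) C₁)) := by
    simp only [hsm]
    exact tendsto_const_nhds
  exact tendsto_nhds_unique hdom hconst
end

section
/- Let f : [0,1]² → ℂ and suppose u : ℝ² → ℂ is a C¹ doubly periodic function (period 1 in both variables) and Z : ℝ² → ℂ is a C¹ map with dZ = a dx + b dy where a, b are doubly periodic C¹ functions with a_y = b_x (i.e., dZ is closed). If L u := b u_x − a u_y = f on ℝ² with f doubly periodic, then ∫_{[0,1]²} f(x,y) dx dy = 0. -/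
open MeasureTheory

theorem stmt_17 (a b u f : ℝ × ℝ → ℂ)
    (ha : ContDiff ℝ 1 a) (hb : ContDiff ℝ 1 b) (hu : ContDiff ℝ 1 u)
    (hap : ∀ x y : ℝ, a (x + 1, y) = a (x, y) ∧ a (x, y + 1) = a (x, y))
    (hbp : ∀ x y : ℝ, b (x + 1, y) = b (x, y) ∧ b (x, y + 1) = b (x, y))
    (hup : ∀ x y : ℝ, u (x + 1, y) = u (x, y) ∧ u (x, y + 1) = u (x, y))
    (hfp : ∀ x y : ℝ, f (x + 1, y) = f (x, y) ∧ f (x, y + 1) = f (x, y))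
    (hclosed : ∀ p : ℝ × ℝ, fderiv ℝ a p (0, 1) = fderiv ℝ b p (1, 0))
    (hL : ∀ p : ℝ × ℝ, b p * fderiv ℝ u p (1, 0) - a p * fderiv ℝ u p (0, 1) = f p) :
    ∫ p in Set.Icc ((0 : ℝ), (0 : ℝ)) ((1 : ℝ), (1 : ℝ)), f p = 0 := by
  set g : ℝ × ℝ → ℂ := fun p => b p * u p with hgdef
  set h : ℝ × ℝ → ℂ := fun p => a p * u p with hhdef
  have hg : ContDiff ℝ 1 g := hb.mul hu
  have hh : ContDiff ℝ 1 h := ha.mul hu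
  have hgd : Differentiable ℝ g := hg.differentiable one_ne_zero
  have hhd : Differentiable ℝ h := hh.differentiable one_ne_zero
  have had : Differentiable ℝ a := ha.differentiable one_ne_zero
  have hbd : Differentiable ℝ b := hb.differentiable one_ne_zero
  have hud : Differentiable ℝ u := hu.differentiable one_ne_zero
  have key : ∀ p, f p = fderiv ℝ g p (1, 0) - fderiv ℝ h p (0, 1) := by
    intro p
    have h1 : fderiv ℝ g p = b p • fderiv ℝ u p + u p • fderiv ℝ b p :=
      fderiv_mul (hbd p) (hud p)
    have h2 : fderiv ℝ h p = a p • fderiv ℝ u p + u p • fderiv ℝ a p :=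
      fderiv_mul (had p) (hud p)
    rw [h1, h2]
    simp only [ContinuousLinearMap.add_apply, ContinuousLinearMap.smul_apply, smul_eq_mul]
    rw [hclosed p, ← hL p]; ring
  -- continuity of the derivative applications
  have hgc : Continuous fun p => fderiv ℝ g p (1, 0) :=
    (ContinuousLinearMap.apply ℝ ℂ ((1:ℝ), (0:ℝ))).continuous.comp (hg.continuous_fderiv one_ne_zero)
  have hhc : Continuous fun p => fderiv ℝ h p (0, 1) :=
    (ContinuousLinearMap.apply ℝ ℂ ((0:ℝ), (1:ℝ))).continuous.comp (hh.continuous_fderiv one_ne_zero)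
  -- inner integrals vanish
  have hxint : ∀ y : ℝ, ∫ x in (0:ℝ)..1, fderiv ℝ g (x, y) (1, 0) = 0 := by
    intro y
    have : ∫ x in (0:ℝ)..1, fderiv ℝ g (x, y) (1, 0) = g (1, y) - g (0, y) := by
      apply intervalIntegral.integral_eq_sub_of_hasDerivAt (f := fun x => g (x, y))
      · intro x hx
        have hc : HasDerivAt (fun x : ℝ => (x, y)) ((1:ℝ), (0:ℝ)) x :=
          HasDerivAt.prodMk (hasDerivAt_id x) (hasDerivAt_const x y)
        exact (hgd (x, y)).hasFDerivAt.comp_hasDerivAt x hc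
      · exact (hgc.comp (continuous_id.prodMk continuous_const)).intervalIntegrable 0 1
    rw [this]
    have hb1 := (hbp 0 y).1
    have hu1 := (hup 0 y).1
    simp only [zero_add] at hb1 hu1
    simp [hgdef, hb1, hu1]
  have hyint : ∀ x : ℝ, ∫ y in (0:ℝ)..1, fderiv ℝ h (x, y) (0, 1) = 0 := by
    intro x
    have : ∫ y in (0:ℝ)..1, fderiv ℝ h (x, y) (0, 1) = h (x, 1) - h (x, 0) := by
      apply intervalIntegral.integral_eq_sub_of_hasDerivAt (f := fun y => h (x, y))
      · intro y hy
        have hc : HasDerivAt (fun y : ℝ => (x, y)) ((0:ℝ), (1:ℝ)) y :=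
          HasDerivAt.prodMk (hasDerivAt_const y x) (hasDerivAt_id y)
        exact (hhd (x, y)).hasFDerivAt.comp_hasDerivAt y hc
      · exact (hhc.comp (continuous_const.prodMk continuous_id)).intervalIntegrable 0 1
    rw [this]
    have ha1 := (hap x 0).2
    have hu1 := (hup x 0).2
    simp only [zero_add] at ha1 hu1
    simp [hhdef, ha1, hu1]
  -- set up product structure
  have hIcc : (Set.Icc ((0:ℝ), (0:ℝ)) ((1:ℝ), (1:ℝ)))
      = Set.Icc (0:ℝ) 1 ×ˢ Set.Icc (0:ℝ) 1 := Set.Icc_prod_eq _ _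
  have hcompact : IsCompact (Set.Icc (0:ℝ) 1 ×ˢ Set.Icc (0:ℝ) 1) :=
    (isCompact_Icc).prod isCompact_Icc
  have hintg : IntegrableOn (fun p => fderiv ℝ g p (1, 0))
      (Set.Icc (0:ℝ) 1 ×ˢ Set.Icc (0:ℝ) 1) := hgc.continuousOn.integrableOn_compact hcompact
  have hinth : IntegrableOn (fun p => fderiv ℝ h p (0, 1))
      (Set.Icc (0:ℝ) 1 ×ˢ Set.Icc (0:ℝ) 1) := hhc.continuousOn.integrableOn_compact hcompact
  have hfg : f = fun p => fderiv ℝ g p (1, 0) - fderiv ℝ h p (0, 1) := funext key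
  rw [hIcc, hfg, integral_sub hintg hinth]
  rw [Measure.volume_eq_prod] at hintg hinth ⊢
  have hG : ∫ p in Set.Icc (0:ℝ) 1 ×ˢ Set.Icc (0:ℝ) 1, fderiv ℝ g p (1, 0)
      ∂((volume : Measure ℝ).prod volume) = 0 := by
    rw [setIntegral_prod _ hintg]
    have hswap : ∫ x in Set.Icc (0:ℝ) 1, ∫ y in Set.Icc (0:ℝ) 1, fderiv ℝ g (x, y) (1, 0)
        = ∫ y in Set.Icc (0:ℝ) 1, ∫ x in Set.Icc (0:ℝ) 1, fderiv ℝ g (x, y) (1, 0) := by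
      apply integral_integral_swap
      rw [IntegrableOn, ← Measure.prod_restrict] at hintg
      exact hintg
    rw [hswap]
    have : ∀ y : ℝ, ∫ x in Set.Icc (0:ℝ) 1, fderiv ℝ g (x, y) (1, 0) = 0 := by
      intro y
      rw [integral_Icc_eq_integral_Ioc, ← intervalIntegral.integral_of_le zero_le_one]
      exact hxint y
    simp [this]
  have hH : ∫ p in Set.Icc (0:ℝ) 1 ×ˢ Set.Icc (0:ℝ) 1, fderiv ℝ h p (0, 1)
      ∂((volume : Measure ℝ).prod volume) = 0 := by
    rw [setIntegral_prod _ hinth]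
    have : ∀ x : ℝ, ∫ y in Set.Icc (0:ℝ) 1, fderiv ℝ h (x, y) (0, 1) = 0 := by
      intro x
      rw [integral_Icc_eq_integral_Ioc, ← intervalIntegral.integral_of_le zero_le_one]
      exact hyint x
    simp [this]
  rw [hG, hH, sub_zero]
end
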